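/- Suppose there exists an optimal solution (x*, y*) of (P) such that the value function V is calm at x*. Then inf φ_τ = 𝔪 and 𝔪 is a real number, where 𝔪 is the minimum value of (P). -/

import Mathlib

open Filter Topology Metric Set

attribute [local instance] Classical.propDecidable

noncomputable section

/-- `ℝ^n` with the Euclidean norm. -/
abbrev Rn (n : ℕ) : Type := EuclideanSpace ℝ (Fin n)

variable {n m : ℕ} {Q : Type*} [NormedAddCommGroup Q]

/-- `(x, y)` is feasible in the bilevel problem (P): `x ∈ X` and
`y ∈ τ-argmin_{z ∈ Y} { g(x,z) | H(x,z) ∈ D }`. -/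
def PFeas (X : Set (Rn n)) (Y : Set (Rn m)) (D : Set Q)
    (g : Rn n × Rn m → ℝ) (H : Rn n × Rn m → Q) (τ : ℝ)
    (x : Rn n) (y : Rn m) : Prop :=
  x ∈ X ∧ y ∈ Y ∧ H (x, y) ∈ D ∧
    ∀ z ∈ Y, H (x, z) ∈ D → g (x, y) ≤ g (x, z) + τ

/-- The minimum value `𝔪` of (P). -/
def PVal (X : Set (Rn n)) (Y : Set (Rn m)) (D : Set Q)
    (f : Rn n × Rn m → EReal) (g : Rn n × Rn m → ℝ) (H : Rn n × Rn m → Q)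
    (τ : ℝ) : EReal :=
  ⨅ (x : Rn n) (y : Rn m) (_ : PFeas X Y D g H τ x y), f (x, y)

/-- Optimal solution of (P): feasible, finite objective value attaining `𝔪`. -/
def POpt (X : Set (Rn n)) (Y : Set (Rn m)) (D : Set Q)
    (f : Rn n × Rn m → EReal) (g : Rn n × Rn m → ℝ) (H : Rn n × Rn m → Q)
    (τ : ℝ) (x : Rn n) (y : Rn m) : Prop :=
  PFeas X Y D g H τ x y ∧ f (x, y) ≠ ⊤ ∧ f (x, y) = PVal X Y D f g H τ

/-- Feasibility in the alternative problem (P)^ν with data `Yn, gn, Hn, lamBar, τn`. -/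
def PnuFeas (X : Set (Rn n)) (Y : Set (Rn m)) (D : Set Q) (Yn : Set (Rn m))
    (gn : Rn n × Rn m → ℝ) (Hn : Rn n × Rn m → Q) (lamBar τn : ℝ)
    (x : Rn n) (y : Rn m) (u : Q) (α lam : ℝ) : Prop :=
  x ∈ X ∧ y ∈ Y ∧ α ≤ 0 ∧ 0 ≤ lam ∧ lam ≤ lamBar ∧ Hn (x, y) + u ∈ D ∧
    ∀ z ∈ Yn, gn (x, y) + α ≤ gn (x, z) + lam * infDist (Hn (x, z)) D + τn

/-- Objective function of (P)^ν: `f^ν(x,y) + σ^ν ‖u‖ - θ^ν α`. -/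
def PnuObj (fn : Rn n × Rn m → EReal) (σn θn : ℝ)
    (x : Rn n) (y : Rn m) (u : Q) (α : ℝ) : EReal :=
  fn (x, y) + ((σn * ‖u‖ - θn * α : ℝ) : EReal)

/-- The minimum value `𝔪^ν` of (P)^ν. -/
def PnuVal (X : Set (Rn n)) (Y : Set (Rn m)) (D : Set Q) (Yn : Set (Rn m))
    (fn : Rn n × Rn m → EReal) (gn : Rn n × Rn m → ℝ) (Hn : Rn n × Rn m → Q)
    (σn θn lamBar τn : ℝ) : EReal :=
  ⨅ (x : Rn n) (y : Rn m) (u : Q) (α : ℝ) (lam : ℝ)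
    (_ : PnuFeas X Y D Yn gn Hn lamBar τn x y u α lam),
    PnuObj fn σn θn x y u α

/-- `ε`-optimal solution of (P)^ν: feasible with finite objective value at most `𝔪^ν + ε`. -/
def PnuEps (X : Set (Rn n)) (Y : Set (Rn m)) (D : Set Q) (Yn : Set (Rn m))
    (fn : Rn n × Rn m → EReal) (gn : Rn n × Rn m → ℝ) (Hn : Rn n × Rn m → Q)
    (σn θn lamBar τn ε : ℝ)
    (x : Rn n) (y : Rn m) (u : Q) (α lam : ℝ) : Prop :=
  PnuFeas X Y D Yn gn Hn lamBar τn x y u α lam ∧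
    PnuObj fn σn θn x y u α ≠ ⊤ ∧
    PnuObj fn σn θn x y u α ≤ PnuVal X Y D Yn fn gn Hn σn θn lamBar τn + (ε : EReal)

/-- The value function `V(x,u) = inf_{y ∈ Y} { g(x,y) | H(x,y) + u ∈ D }`. -/
def Vfun (Y : Set (Rn m)) (D : Set Q)
    (g : Rn n × Rn m → ℝ) (H : Rn n × Rn m → Q)
    (x : Rn n) (u : Q) : EReal :=
  ⨅ (y : Rn m) (_ : y ∈ Y ∧ H (x, y) + u ∈ D), (g (x, y) : EReal)

/-- The value function `V` is calm at `x` with penalty threshold `lam`. -/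
def CalmAtWith (Y : Set (Rn m)) (D : Set Q)
    (g : Rn n × Rn m → ℝ) (H : Rn n × Rn m → Q)
    (x : Rn n) (lam : ℝ) : Prop :=
  0 ≤ lam ∧ ∀ u : Q,
    Vfun Y D g H x 0 - ((lam * ‖u‖ : ℝ) : EReal) ≤ Vfun Y D g H x u

/-- The value function `V` is calm at `x`. -/
def CalmAt (Y : Set (Rn m)) (D : Set Q)
    (g : Rn n × Rn m → ℝ) (H : Rn n × Rn m → Q) (x : Rn n) : Prop :=
  ∃ lam : ℝ, CalmAtWith Y D g H x lam

/-- The value function `V` is locally calm at `xbar`. -/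
def LocallyCalmAt (Y : Set (Rn m)) (D : Set Q)
    (g : Rn n × Rn m → ℝ) (H : Rn n × Rn m → Q) (xbar : Rn n) : Prop :=
  ∃ lam ρ : ℝ, 0 ≤ lam ∧ 0 < ρ ∧
    ∀ x ∈ Metric.closedBall xbar ρ, ∀ u : Q,
      Vfun Y D g H x 0 - ((lam * ‖u‖ : ℝ) : EReal) ≤ Vfun Y D g H x u

/-- The penalty-based value function `μ(x,λ) = inf_{y ∈ S} [g(x,y) + λ dist(H(x,y), D)]`. -/
def muSet (S : Set (Rn m)) (D : Set Q)
    (g : Rn n × Rn m → ℝ) (H : Rn n × Rn m → Q)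
    (x : Rn n) (lam : ℝ) : EReal :=
  ⨅ (y : Rn m) (_ : y ∈ S), ((g (x, y) + lam * infDist (H (x, y)) D : ℝ) : EReal)

/-- The Basic Assumption (Assumption 2.1). -/
structure BasicAssumption (X : Set (Rn n)) (Y : Set (Rn m)) (D : Set Q)
    (Yν : ℕ → Set (Rn m))
    (f : Rn n × Rn m → EReal) (fν : ℕ → Rn n × Rn m → EReal)
    (g : Rn n × Rn m → ℝ) (gν : ℕ → Rn n × Rn m → ℝ)
    (H : Rn n × Rn m → Q) (Hν : ℕ → Rn n × Rn m → Q)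
    (σ θ lamBar τν δ η : ℕ → ℝ) : Prop where
  X_nonempty : X.Nonempty
  X_closed : IsClosed X
  Y_nonempty : Y.Nonempty
  Y_closed : IsClosed Y
  D_nonempty : D.Nonempty
  D_closed : IsClosed D
  Yν_nonempty : ∀ ν, (Yν ν).Nonempty
  Yν_subset : ∀ ν, Yν ν ⊆ Y
  Yν_conv : ∀ y : Rn m,
    Tendsto (fun ν => infDist y (Yν ν)) atTop (𝓝 (infDist y Y))
  δ_lim : Tendsto δ atTop (𝓝 0)
  g_err : ∀ ν, ∀ x ∈ X, ∀ y ∈ Y, |gν ν (x, y) - g (x, y)| ≤ δ ν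
  g_cont : ContinuousOn g (X ×ˢ Y)
  η_lim : Tendsto η atTop (𝓝 0)
  H_err : ∀ ν, ∀ x ∈ X, ∀ y ∈ Y,
    |infDist (Hν ν (x, y)) D - infDist (H (x, y)) D| ≤ η ν
  H_cont : ContinuousOn H (X ×ˢ Y)
  f_ne_bot : ∀ p, f p ≠ ⊥
  fν_ne_bot : ∀ ν p, fν ν p ≠ ⊥
  f_limsup : ∀ x ∈ X, ∀ y ∈ Y,
    limsup (fun ν => fν ν (x, y)) atTop ≤ f (x, y)
  f_liminf : ∀ x ∈ X, ∀ y ∈ Y, ∀ (xs : ℕ → Rn n) (ys : ℕ → Rn m),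
    (∀ ν, xs ν ∈ X) → (∀ ν, ys ν ∈ Y) →
    Tendsto xs atTop (𝓝 x) → Tendsto ys atTop (𝓝 y) →
    f (x, y) ≤ liminf (fun ν => fν ν (xs ν, ys ν)) atTop
  σ_nonneg : ∀ ν, 0 ≤ σ ν
  θ_nonneg : ∀ ν, 0 ≤ θ ν
  lamBar_nonneg : ∀ ν, 0 ≤ lamBar ν
  τν_nonneg : ∀ ν, 0 ≤ τν ν
  lamBar_top : Tendsto lamBar atTop atTop
  ση_lim : Tendsto (fun ν => σ ν * η ν) atTop (𝓝 0)
  θlamη_lim : Tendsto (fun ν => θ ν * lamBar ν * η ν) atTop (𝓝 0)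
  θδ_lim : Tendsto (fun ν => θ ν * δ ν) atTop (𝓝 0)

/-- The extended real-valued representation `φ^ν` of (P)^ν. -/
def phiNu (X : Set (Rn n)) (Y : Set (Rn m)) (D : Set Q) (Yn : Set (Rn m))
    (fn : Rn n × Rn m → EReal) (gn : Rn n × Rn m → ℝ) (Hn : Rn n × Rn m → Q)
    (σn θn lamBar τn : ℝ)
    (x : Rn n) (y : Rn m) (u : Q) (α lam : ℝ) : EReal :=
  if x ∈ X ∧ y ∈ Y ∧ α ≤ 0 ∧ 0 ≤ lam ∧ lam ≤ lamBar ∧ Hn (x, y) + u ∈ D ∧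
      ((gn (x, y) + α : ℝ) : EReal) ≤ muSet Yn D gn Hn x lam + (τn : EReal)
  then fn (x, y) + ((σn * ‖u‖ - θn * α : ℝ) : EReal) else ⊤

/-- The extended real-valued function `φ_β` representing a restriction of (P). -/
def phiBeta (X : Set (Rn n)) (Y : Set (Rn m)) (D : Set Q)
    (f : Rn n × Rn m → EReal) (g : Rn n × Rn m → ℝ) (H : Rn n × Rn m → Q)
    (β : ℝ)
    (x : Rn n) (y : Rn m) (u : Q) (α lam : ℝ) : EReal :=
  if x ∈ X ∧ y ∈ Y ∧ u = 0 ∧ α = 0 ∧ 0 ≤ lam ∧ H (x, y) ∈ D ∧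
      (g (x, y) : EReal) ≤ muSet Y D g H x lam + (β : EReal)
  then f (x, y) else ⊤

/-- `inf φ_τ`, the infimum of `φ_τ` over all `(x, y, u, α, λ)`. -/
def phiBetaInf (X : Set (Rn n)) (Y : Set (Rn m)) (D : Set Q)
    (f : Rn n × Rn m → EReal) (g : Rn n × Rn m → ℝ) (H : Rn n × Rn m → Q)
    (β : ℝ) : EReal :=
  ⨅ (x : Rn n) (y : Rn m) (u : Q) (α : ℝ) (lam : ℝ),
    phiBeta X Y D f g H β x y u α lam

/-- Lemma 5.5(a): under calmness at an optimal solution of (P), `inf φ_τ = 𝔪 ∈ ℝ`. -/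
theorem phiTau_inf_eq_PVal
    [NormedSpace ℝ Q] [FiniteDimensional ℝ Q]
    (X : Set (Rn n)) (Y : Set (Rn m)) (D : Set Q)
    (f : Rn n × Rn m → EReal) (g : Rn n × Rn m → ℝ) (H : Rn n × Rn m → Q)
    (τ : ℝ) (hτ : 0 ≤ τ)
    (hXne : X.Nonempty) (hYne : Y.Nonempty) (hDne : D.Nonempty)
    (hf_bot : ∀ p, f p ≠ ⊥)
    (xstar : Rn n) (ystar : Rn m)
    (hopt : POpt X Y D f g H τ xstar ystar)
    (hcalm : CalmAt Y D g H xstar) :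
    phiBetaInf X Y D f g H τ = PVal X Y D f g H τ ∧
    ∃ r : ℝ, PVal X Y D f g H τ = (r : EReal) := by
  obtain ⟨⟨hxX, hyY, hHD, hτopt⟩, hfne_top, hfval⟩ := hopt
  obtain ⟨lam, hlam0, hcalm'⟩ := hcalm
  obtain ⟨r, hr⟩ : ∃ r : ℝ, f (xstar, ystar) = (r : EReal) :=
    ⟨(f (xstar, ystar)).toReal, (EReal.coe_toReal hfne_top (hf_bot _)).symm⟩
  -- Value function at 0 bounds
  have hV0_le : Vfun Y D g H xstar 0 ≤ (g (xstar, ystar) : EReal) := by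
    refine iInf₂_le ystar ⟨hyY, by rwa [add_zero]⟩
  have hV0_ge : ((g (xstar, ystar) - τ : ℝ) : EReal) ≤ Vfun Y D g H xstar 0 := by
    refine le_iInf₂ fun z hz => ?_
    rw [add_zero] at hz
    rw [EReal.coe_le_coe_iff]
    have := hτopt z hz.1 hz.2
    linarith
  have hV0_ne_top : Vfun Y D g H xstar 0 ≠ ⊤ :=
    (lt_of_le_of_lt hV0_le (EReal.coe_lt_top _)).ne
  have hV0_ne_bot : Vfun Y D g H xstar 0 ≠ ⊥ := by
    intro h
    rw [h] at hV0_ge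
    exact (EReal.coe_ne_bot _) (le_bot_iff.mp hV0_ge)
  obtain ⟨v, hv⟩ : ∃ v : ℝ, Vfun Y D g H xstar 0 = (v : EReal) :=
    ⟨(Vfun Y D g H xstar 0).toReal, (EReal.coe_toReal hV0_ne_top hV0_ne_bot).symm⟩
  have hgv : g (xstar, ystar) - τ ≤ v := by
    rw [hv, EReal.coe_le_coe_iff] at hV0_ge; exact hV0_ge
  -- key real inequality via calmness
  have key : ∀ y ∈ Y, g (xstar, ystar) - τ ≤ g (xstar, y) + lam * infDist (H (xstar, y)) D := by
    intro y hy
    have hstep : ∀ ε : ℝ, 0 < ε →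
        g (xstar, ystar) - τ ≤ g (xstar, y) + lam * infDist (H (xstar, y)) D + lam * ε := by
      intro ε hε
      have hlt : infDist (H (xstar, y)) D < infDist (H (xstar, y)) D + ε := by linarith
      obtain ⟨a, haD, hadist⟩ := (Metric.infDist_lt_iff hDne).mp hlt
      set u : Q := a - H (xstar, y) with hu
      have hmem : H (xstar, y) + u ∈ D := by
        rw [hu, add_sub_cancel]; exact haD
      have hVu_le : Vfun Y D g H xstar u ≤ (g (xstar, y) : EReal) :=
        iInf₂_le y ⟨hy, hmem⟩
      have hc := hcalm' u
      rw [hv] at hc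
      have hc' : ((v - lam * ‖u‖ : ℝ) : EReal) ≤ Vfun Y D g H xstar u := by
        rw [EReal.coe_sub]; exact hc
      have hreal : v - lam * ‖u‖ ≤ g (xstar, y) := by
        rw [← EReal.coe_le_coe_iff]; exact hc'.trans hVu_le
      have hnorm : ‖u‖ ≤ infDist (H (xstar, y)) D + ε := by
        have : ‖u‖ = dist (H (xstar, y)) a := by
          rw [hu, dist_eq_norm, norm_sub_rev]
        rw [this]; exact hadist.le
      have hmul : lam * ‖u‖ ≤ lam * (infDist (H (xstar, y)) D + ε) :=
        mul_le_mul_of_nonneg_left hnorm hlam0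
      nlinarith
    refine le_of_forall_pos_le_add fun ε hε => ?_
    rcases eq_or_lt_of_le hlam0 with h0 | h0
    · have := hstep 1 one_pos
      rw [← h0] at this ⊢
      simpa using this.trans (by linarith)
    · have := hstep (ε / lam) (div_pos hε h0)
      rw [mul_div_cancel₀ _ h0.ne'] at this
      linarith
  -- muSet lower bound
  have hmu : ((g (xstar, ystar) - τ : ℝ) : EReal) ≤ muSet Y D g H xstar lam := by
    refine le_iInf₂ fun y hy => ?_
    rw [EReal.coe_le_coe_iff]
    exact key y hy
  have hcond : (g (xstar, ystar) : EReal) ≤ muSet Y D g H xstar lam + (τ : EReal) := by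
    have : (g (xstar, ystar) : EReal) = ((g (xstar, ystar) - τ : ℝ) : EReal) + (τ : EReal) := by
      rw [← EReal.coe_add]; norm_num
    rw [this]
    exact add_le_add_left hmu _
  -- upper bound: inf φ ≤ 𝔪
  have hupper : phiBetaInf X Y D f g H τ ≤ f (xstar, ystar) := by
    have h1 : phiBetaInf X Y D f g H τ ≤ phiBeta X Y D f g H τ xstar ystar 0 0 lam :=
      iInf_le_of_le xstar (iInf_le_of_le ystar (iInf_le_of_le 0 (iInf_le_of_le 0 (iInf_le _ lam))))
    rwa [phiBeta, if_pos ⟨hxX, hyY, rfl, rfl, hlam0, hHD, hcond⟩] at h1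
  -- lower bound: 𝔪 ≤ inf φ
  have hlower : PVal X Y D f g H τ ≤ phiBetaInf X Y D f g H τ := by
    refine le_iInf fun x => le_iInf fun y => le_iInf fun u => le_iInf fun α => le_iInf fun lm => ?_
    rw [phiBeta]
    split_ifs with h
    · obtain ⟨hx, hy, -, -, -, hHxy, hmuc⟩ := h
      have hfeas : PFeas X Y D g H τ x y := by
        refine ⟨hx, hy, hHxy, fun z hz hHz => ?_⟩
        have h2 : muSet Y D g H x lm ≤ ((g (x, z) + lm * infDist (H (x, z)) D : ℝ) : EReal) :=
          iInf₂_le z hz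
        rw [Metric.infDist_zero_of_mem hHz] at h2
        have h3 : (g (x, y) : EReal) ≤ ((g (x, z) + lm * 0 : ℝ) : EReal) + (τ : EReal) :=
          hmuc.trans (add_le_add_left h2 _)
        rw [← EReal.coe_add, EReal.coe_le_coe_iff] at h3
        linarith
      exact iInf_le_of_le x (iInf_le_of_le y (iInf_le _ hfeas))
    · exact le_top
  refine ⟨le_antisymm (hfval ▸ hupper) hlower, r, ?_⟩
  rw [← hfval, hr]
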